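/- Let ω ∈ S_n, 1 ≤ i < j ≤ n with (i,j) ∉ Inv(ω) (i.e. ω(i) < ω(j)), and let x ∈ [c_i(ω)], y ∈ [c_j(ω)]. Then m_{i,x}(ω) > m_{j,y}(ω) in the product order on ℕ^n if and only if y ≤ x − c_{i,j}(ω). -/

import Mathlib

open Finset

/-- `c_i(ω)`: the number of `j > i` with `ω i > ω j` (the Lehmer code entries). -/
def lehmer {n : ℕ} (ω : Equiv.Perm (Fin n)) (i : Fin n) : ℕ :=
  (univ.filter fun j => i < j ∧ ω j < ω i).card

/-- `c_{i,j}(ω)`: the number of `k` with `i < k < j` and `ω i > ω k`. -/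
def cij {n : ℕ} (ω : Equiv.Perm (Fin n)) (i j : Fin n) : ℕ :=
  (univ.filter fun k => i < k ∧ k < j ∧ ω k < ω i).card

/-- `m_{i,x}(ω) ∈ ℕ^n`, defined coordinatewise. -/
def mvec {n : ℕ} (ω : Equiv.Perm (Fin n)) (i : Fin n) (x : ℕ) : Fin n → ℕ :=
  fun j => if j < i then 0 else if j = i then x
    else if ω j < ω i then 0 else x - cij ω i j

lemma cij_le_aux {n : ℕ} (ω : Equiv.Perm (Fin n)) {i j k : Fin n}
    (hjk : j < k) (hω : ω i < ω j) :
    cij ω i k ≤ cij ω i j + cij ω j k := by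
  classical
  unfold cij
  calc (univ.filter fun m => i < m ∧ m < k ∧ ω m < ω i).card
      ≤ ((univ.filter fun m => i < m ∧ m < j ∧ ω m < ω i) ∪
         (univ.filter fun m => j < m ∧ m < k ∧ ω m < ω j)).card := by
        apply Finset.card_le_card
        intro m hm
        simp only [Finset.mem_filter, Finset.mem_union, Finset.mem_univ, true_and] at *
        obtain ⟨h1, h2, h3⟩ := hm
        rcases lt_trichotomy m j with h | h | h
        · exact Or.inl ⟨h1, h, h3⟩
        · subst h; exact absurd h3 (not_lt.2 hω.le)
        · exact Or.inr ⟨h, h2, h3.trans hω⟩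
    _ ≤ _ := Finset.card_union_le _ _

theorem stmt4 (n : ℕ) (ω : Equiv.Perm (Fin n)) (i j : Fin n) (x y : ℕ)
    (hij : i < j) (hω : ω i < ω j)
    (hx1 : 1 ≤ x) (hx2 : x ≤ lehmer ω i) (hy1 : 1 ≤ y) (hy2 : y ≤ lehmer ω j) :
    mvec ω j y < mvec ω i x ↔ y ≤ x - cij ω i j := by
  constructor
  · intro h
    have hle := h.le j
    simpa [mvec, hij.not_gt, hij.ne', hω.not_gt] using hle
  · intro h
    rw [Pi.lt_def]
    refine ⟨fun k => ?_, i, ?_⟩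
    · by_cases hkj : k < j
      · simp [mvec, hkj]
      · by_cases hkj2 : k = j
        · subst hkj2
          simpa [mvec, hij.not_gt, hij.ne', hω.not_gt] using h
        · have hjk : j < k := lt_of_le_of_ne (not_lt.1 hkj) (Ne.symm hkj2)
          by_cases hωk : ω k < ω j
          · simp [mvec, hjk.not_gt, hkj2, hωk]
          · have hωjk : ω j < ω k :=
              (not_lt.1 hωk).lt_of_ne (fun hh => hkj2 (ω.injective hh.symm))
            have hik : i < k := hij.trans hjk
            have hωik : ω i < ω k := hω.trans hωjk
            have key : y - cij ω j k ≤ x - cij ω i k := by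
              calc y - cij ω j k ≤ (x - cij ω i j) - cij ω j k :=
                    Nat.sub_le_sub_right h _
                _ = x - (cij ω i j + cij ω j k) := by rw [Nat.sub_sub]
                _ ≤ x - cij ω i k := Nat.sub_le_sub_left (cij_le_aux ω hjk hω) x
            simpa [mvec, hjk.not_gt, hkj2, hωk, hik.not_gt, hik.ne', hωik.not_gt] using key
    · simpa [mvec, hij] using (show 0 < x from hx1)
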